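/- Let A be a self-adjoint operator on a separable Hilbert space with orthonormal eigenbasis (e_j) and eigenvalues λ_j ≤ 0, and let τ > 0. Define S̃(z) = S(z)/z³ where S(z) = a e^z + (1/2)e^{2āz} + ā - z⁻¹(e^z - 1), a = (1/4)(1 - i/√3). If v ∈ D(A²), then ‖(τA)² S̃(τA) v‖ ≤ C τ² ‖A² v‖ for a constant C independent of τ and v. -/

import Mathlib

noncomputable def a : ℂ := (1/4) * (1 - Complex.I / Real.sqrt 3)
noncomputable def abar : ℂ := (1/4) * (1 + Complex.I / Real.sqrt 3)

noncomputable def S (z : ℂ) : ℂ :=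
  if z = 0 then 0 else
    a * Complex.exp z + (1/2) * Complex.exp (2 * abar * z) + abar
      - z⁻¹ * (Complex.exp z - 1)

noncomputable def Stilde (z : ℂ) : ℂ := S z / z ^ 3

lemma h_sum : a + abar = 1/2 := by unfold a abar; ring

lemma hsinv : (((Real.sqrt 3 : ℝ) : ℂ))⁻¹ ^ 2 = 1/3 := by
  rw [inv_pow]
  norm_cast
  rw [Real.sq_sqrt (by norm_num : (0:ℝ) ≤ 3)]
  norm_num

lemma h_sq : a/2 + abar^2 = 1/6 := by
  unfold a abar
  linear_combination ((((Real.sqrt 3:ℝ):ℂ))⁻¹^2/16) * Complex.I_sq - (1/16) * hsinv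

lemma habs_inv_sqrt3 : ‖(((Real.sqrt 3:ℝ):ℂ))⁻¹‖ ≤ 1 := by
  rw [norm_inv, Complex.norm_real, Real.norm_eq_abs, abs_of_nonneg (Real.sqrt_nonneg 3), inv_le_one_iff₀]
  right
  nlinarith [Real.sq_sqrt (by norm_num : (0:ℝ) ≤ 3), Real.sqrt_nonneg 3]

lemma habs_a : ‖a‖ ≤ 1/2 := by
  unfold a
  calc ‖(1/4) * (1 - Complex.I / Real.sqrt 3)‖
      ≤ (1/4) * (‖(1:ℂ)‖ + ‖Complex.I / Real.sqrt 3‖) := by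
        rw [norm_mul]
        gcongr
        · simp
        · exact norm_sub_le _ _
    _ ≤ (1/4) * (1 + 1) := by
        gcongr
        · simp
        · rw [div_eq_mul_inv, norm_mul, Complex.norm_I, one_mul]
          exact habs_inv_sqrt3
    _ = 1/2 := by norm_num

lemma habs_abar : ‖abar‖ ≤ 1/2 := by
  unfold abar
  calc ‖(1/4) * (1 + Complex.I / Real.sqrt 3)‖
      ≤ (1/4) * (‖(1:ℂ)‖ + ‖Complex.I / Real.sqrt 3‖) := by
        rw [norm_mul]
        gcongr
        · simp
        · exact norm_add_le _ _
    _ ≤ (1/4) * (1 + 1) := by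
        gcongr
        · simp
        · rw [div_eq_mul_inv, norm_mul, Complex.norm_I, one_mul]
          exact habs_inv_sqrt3
    _ = 1/2 := by norm_num

lemma h_re_w (x : ℝ) : (2 * abar * (x:ℂ)).re = x/2 := by
  simp [abar, Complex.mul_re, Complex.div_re]
  ring

lemma key {x : ℝ} (hx : x ≤ 0) : ‖Stilde x‖ ≤ 10 := by
  rcases eq_or_lt_of_le hx with rfl | hx'
  · simp [Stilde, S]
  set z : ℂ := (x : ℂ) with hzdef
  have hz : z ≠ 0 := by
    simp only [hzdef, ne_eq, Complex.ofReal_eq_zero]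
    exact ne_of_lt hx'
  have hexpz : ‖Complex.exp z‖ ≤ 1 := by
    rw [Complex.norm_exp]
    simp only [hzdef, Complex.ofReal_re]
    exact Real.exp_le_one_iff.mpr hx
  have hexpw : ‖Complex.exp (2 * abar * z)‖ ≤ 1 := by
    rw [Complex.norm_exp, h_re_w x]
    exact Real.exp_le_one_iff.mpr (by linarith)
  have hr0 : 0 ≤ ‖z‖ := norm_nonneg z
  rcases le_or_gt 1 (‖z‖) with hbig | hsmall
  · -- |z| ≥ 1
    have hS : ‖S z‖ ≤ 10 := by
      rw [S, if_neg hz]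
      have h1 : ‖a * Complex.exp z + (1/2) * Complex.exp (2*abar*z) + abar
          - z⁻¹ * (Complex.exp z - 1)‖ ≤
          ‖a * Complex.exp z‖ + ‖(1/2) * Complex.exp (2*abar*z)‖
          + ‖abar‖ + ‖z⁻¹ * (Complex.exp z - 1)‖ :=
        (norm_sub_le _ _).trans (add_le_add
          ((norm_add_le _ _).trans (add_le_add (norm_add_le _ _) le_rfl)) le_rfl)
      refine h1.trans ?_
      have h2 : ‖a * Complex.exp z‖ ≤ 1/2 := by
        rw [norm_mul]
        calc ‖a‖ * ‖Complex.exp z‖ ≤ (1/2) * 1 :=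
              mul_le_mul habs_a hexpz (norm_nonneg _) (by norm_num)
          _ = 1/2 := by norm_num
      have h3 : ‖(1/2 : ℂ) * Complex.exp (2*abar*z)‖ ≤ 1/2 := by
        rw [norm_mul]
        have habs_half : ‖(1:ℂ)/2‖ = 1/2 := by norm_num
        calc ‖(1:ℂ)/2‖ * ‖Complex.exp (2*abar*z)‖ ≤ (1/2) * 1 :=
              mul_le_mul (le_of_eq habs_half) hexpw (norm_nonneg _) (by norm_num)
          _ = 1/2 := by norm_num
      have h4 : ‖z⁻¹ * (Complex.exp z - 1)‖ ≤ 2 := by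
        rw [norm_mul, norm_inv]
        have hd : ‖Complex.exp z - 1‖ ≤ 2 := by
          calc _ ≤ ‖Complex.exp z‖ + ‖1‖ := norm_sub_le _ _
            _ ≤ 1 + 1 := add_le_add hexpz (by simp)
            _ = 2 := by norm_num
        have hinv : (‖z‖)⁻¹ ≤ 1 := by
          rw [inv_le_one_iff₀]; right; exact hbig
        calc (‖z‖)⁻¹ * ‖Complex.exp z - 1‖ ≤ 1 * 2 :=
              mul_le_mul hinv hd (norm_nonneg _) (by norm_num)
          _ = 2 := by norm_num
      linarith [habs_abar]
    rw [Stilde, norm_div, norm_pow]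
    exact (div_le_self (norm_nonneg _) (one_le_pow₀ hbig)).trans hS
  · -- |z| < 1 : Taylor
    have hz1 : ‖z‖ ≤ 1 := le_of_lt hsmall
    set w : ℂ := 2 * abar * z with hwdef
    have habsw : ‖w‖ ≤ ‖z‖ := by
      rw [hwdef, norm_mul]
      have h2a : ‖2 * abar‖ ≤ 1 := by
        rw [norm_mul]
        calc ‖(2:ℂ)‖ * ‖abar‖ ≤ 2 * (1/2) :=
              mul_le_mul (by simp) habs_abar (norm_nonneg _) (by norm_num)
          _ = 1 := by norm_num
      calc ‖2 * abar‖ * ‖z‖ ≤ 1 * ‖z‖ :=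
            mul_le_mul_of_nonneg_right h2a hr0
        _ = ‖z‖ := one_mul _
    have hw1 : ‖w‖ ≤ 1 := habsw.trans hz1
    have hE1 := Complex.exp_bound hz1 (by norm_num : 0 < 3)
    have hE2 := Complex.exp_bound hw1 (by norm_num : 0 < 3)
    have hE3 := Complex.exp_bound hz1 (by norm_num : 0 < 4)
    norm_num [Nat.factorial] at hE1 hE2 hE3
    have hsum3 : ∑ m ∈ Finset.range 3, z ^ m / m.factorial = 1 + z + z^2/2 := by
      simp [Finset.sum_range_succ, Nat.factorial]
    have hsum3w : ∑ m ∈ Finset.range 3, w ^ m / m.factorial = 1 + w + w^2/2 := by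
      simp [Finset.sum_range_succ, Nat.factorial]
    have hsum4 : ∑ m ∈ Finset.range 4, z ^ m / m.factorial = 1 + z + z^2/2 + z^3/6 := by
      simp [Finset.sum_range_succ, Nat.factorial]
    rw [hsum3] at hE1
    rw [hsum3w] at hE2
    rw [hsum4] at hE3
    have hid : z * S z = a * z * (Complex.exp z - (1 + z + z^2/2))
        + (z/2) * (Complex.exp w - (1 + w + w^2/2))
        - (Complex.exp z - (1 + z + z^2/2 + z^3/6)) := by
      rw [S, if_neg hz]
      have hzi : z * z⁻¹ = 1 := mul_inv_cancel₀ hz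
      rw [hwdef]
      linear_combination (-(Complex.exp z - 1)) * hzi + (z + z^2) * h_sum + z^3 * h_sq
    set r := ‖z‖ with hrdef
    have hr : 0 < r := norm_pos_iff.mpr hz
    have hE2' : ‖Complex.exp w - (1 + w + w^2/2)‖ ≤ r ^ 3 * (2/9) := by
      refine hE2.trans ?_
      have : ‖w‖ ^ 3 ≤ r ^ 3 := pow_le_pow_left₀ (norm_nonneg w) habsw 3
      nlinarith
    have t1 : ‖a * z * (Complex.exp z - (1 + z + z^2/2))‖
        ≤ (1/2) * r * (r^3 * (2/9)) := by
      rw [norm_mul, norm_mul]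
      exact mul_le_mul (mul_le_mul habs_a le_rfl hr.le (by norm_num)) hE1
        (norm_nonneg _) (by positivity)
    have t2 : ‖(z/2) * (Complex.exp w - (1 + w + w^2/2))‖
        ≤ (r/2) * (r^3 * (2/9)) := by
      rw [norm_mul]
      have habs_zhalf : ‖z/2‖ = r/2 := by
        rw [norm_div]; norm_num [hrdef]
      exact mul_le_mul (le_of_eq habs_zhalf) hE2' (norm_nonneg _) (by positivity)
    have htri : ‖z * S z‖ ≤ (1/2) * r * (r^3 * (2/9)) + (r/2) * (r^3 * (2/9))
        + r^4 * (5/96) := by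
      rw [hid]
      calc ‖_‖ ≤ ‖a * z * (Complex.exp z - (1 + z + z^2/2))
            + (z/2) * (Complex.exp w - (1 + w + w^2/2))‖
            + ‖Complex.exp z - (1 + z + z^2/2 + z^3/6)‖ := norm_sub_le _ _
        _ ≤ ((1/2) * r * (r^3 * (2/9)) + (r/2) * (r^3 * (2/9))) + r^4 * (5/96) :=
            add_le_add ((norm_add_le _ _).trans (add_le_add t1 t2)) hE3
        _ = _ := by ring
    have hbound : r * ‖S z‖ ≤ r * r^3 := by
      have h := htri
      rw [norm_mul] at h
      nlinarith [pow_nonneg hr.le 3, pow_nonneg hr.le 4]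
    have hSb : ‖S z‖ ≤ r^3 := le_of_mul_le_mul_left hbound hr
    rw [Stilde, norm_div, norm_pow]
    calc ‖S z‖ / r^3 ≤ r^3 / r^3 :=
          div_le_div_of_nonneg_right hSb (by positivity) |>.trans_eq rfl
      _ = 1 := div_self (by positivity)
      _ ≤ 10 := by norm_num

/-- Diagonal formulation: the self-adjoint operator `A` has eigenvalues `λ j ≤ 0`
with respect to an orthonormal eigenbasis; a vector is identified with its sequence
of coefficients `v : ℕ → ℂ`, membership in `D(A²)` with square summability of
`λ_j² v_j`, and `(τA)² S̃(τA)` acts diagonally by multiplication by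
`(τλ_j)² S̃(τλ_j)`. -/
theorem stmt14 (lam : ℕ → ℝ) (hlam : ∀ j, lam j ≤ 0) :
    ∃ C : ℝ, 0 < C ∧ ∀ (τ : ℝ), 0 < τ → ∀ v : ℕ → ℂ,
      Summable (fun j => ‖((lam j : ℂ)) ^ 2 * v j‖ ^ 2) →
      Real.sqrt (∑' j, ‖((τ * lam j : ℂ)) ^ 2 * Stilde (τ * lam j) * v j‖ ^ 2)
        ≤ C * τ ^ 2 * Real.sqrt (∑' j, ‖((lam j : ℂ)) ^ 2 * v j‖ ^ 2) := by
  refine ⟨10, by norm_num, ?_⟩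
  intro τ hτ v hsum
  have hpt : ∀ j, ‖((τ * lam j : ℂ)) ^ 2 * Stilde (τ * lam j) * v j‖ ^ 2
      ≤ (10 * τ^2)^2 * ‖((lam j : ℂ)) ^ 2 * v j‖ ^ 2 := by
    intro j
    have hμ : τ * lam j ≤ 0 := mul_nonpos_iff.mpr (Or.inl ⟨hτ.le, hlam j⟩)
    have hcast : ((τ * lam j : ℂ)) = (((τ * lam j : ℝ)) : ℂ) := by push_cast; ring
    have hSt : ‖Stilde ((τ * lam j : ℂ))‖ ≤ 10 := by
      rw [hcast]
      exact key hμ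
    have h1 : ‖((τ * lam j : ℂ)) ^ 2 * Stilde (τ * lam j) * v j‖
        ≤ 10 * τ^2 * ‖((lam j : ℂ)) ^ 2 * v j‖ := by
      rw [norm_mul, norm_mul, norm_mul, norm_pow, norm_pow]
      have e1 : ‖((τ * lam j : ℂ))‖ ^ 2 = τ^2 * (lam j)^2 := by
        rw [hcast, Complex.norm_real, Real.norm_eq_abs, sq_abs]
        ring
      have e2 : ‖((lam j : ℂ))‖ ^ 2 = (lam j)^2 := by
        rw [Complex.norm_real, Real.norm_eq_abs, sq_abs]
      rw [e1, e2]
      have hv : (0:ℝ) ≤ ‖v j‖ := norm_nonneg _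
      have hS0 : (0:ℝ) ≤ ‖Stilde ((τ * lam j : ℂ))‖ := norm_nonneg _
      have hl2 : (0:ℝ) ≤ (lam j)^2 := sq_nonneg _
      have ht2 : (0:ℝ) ≤ τ^2 := sq_nonneg _
      nlinarith [mul_le_mul_of_nonneg_left hSt (mul_nonneg (mul_nonneg ht2 hl2) hv)]
    calc ‖((τ * lam j : ℂ)) ^ 2 * Stilde (τ * lam j) * v j‖ ^ 2
        ≤ (10 * τ^2 * ‖((lam j : ℂ)) ^ 2 * v j‖)^2 :=
          pow_le_pow_left₀ (norm_nonneg _) h1 2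
      _ = (10 * τ^2)^2 * ‖((lam j : ℂ)) ^ 2 * v j‖ ^ 2 := by ring
  have hsum2 : Summable (fun j => (10*τ^2)^2 * ‖((lam j : ℂ))^2 * v j‖^2) := hsum.mul_left _
  have hsumL : Summable (fun j => ‖((τ * lam j : ℂ)) ^ 2 * Stilde (τ * lam j) * v j‖ ^ 2) :=
    Summable.of_nonneg_of_le (fun j => sq_nonneg _) hpt hsum2
  have hts := Summable.tsum_le_tsum hpt hsumL hsum2
  rw [tsum_mul_left] at hts
  calc Real.sqrt (∑' j, ‖((τ * lam j : ℂ)) ^ 2 * Stilde (τ * lam j) * v j‖ ^ 2)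
      ≤ Real.sqrt ((10*τ^2)^2 * ∑' j, ‖((lam j : ℂ))^2 * v j‖^2) := Real.sqrt_le_sqrt hts
    _ = (10*τ^2) * Real.sqrt (∑' j, ‖((lam j : ℂ))^2 * v j‖^2) := by
        rw [Real.sqrt_mul (by positivity), Real.sqrt_sq (by positivity)]
    _ = 10 * τ^2 * Real.sqrt (∑' j, ‖((lam j : ℂ))^2 * v j‖^2) := by ring
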